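/- arXiv:2105.05234 — 2 statements merged into one kernel-verified Lean document; each statement's English description precedes it below -/
import Mathlib

section
/- Let G be a connected graph and P a vertex partition of G all of whose blocks induce connected subgraphs. Then the bridge-block decomposition of G is finer than P if and only if the reduced graph G_P is a tree (i.e., it is connected and acyclic, where parallel edges between the same pair of blocks count as a cycle). -/
open SimpleGraph Finset

namespace BBAux

variable {V : Type*} {ι : Type*}

/-- Projecting a reachability statement to the quotient graph. -/
lemma reachable_quotient {G : SimpleGraph V} (π : V → ι) {u v : V} (h : G.Reachable u v) :
    (SimpleGraph.fromRel fun a c => ∃ u v, G.Adj u v ∧ π u = a ∧ π v = c).Reachable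
      (π u) (π v) := by
  obtain ⟨w⟩ := h
  induction w with
  | nil => exact Reachable.refl _
  | @cons x z y h p ih =>
    by_cases hpi : π x = π z
    · rw [hpi]; exact ih
    · refine Reachable.trans ?_ ih
      exact SimpleGraph.Adj.reachable
        ((SimpleGraph.fromRel_adj _ _ _).2 ⟨hpi, Or.inl ⟨x, z, h, rfl, rfl⟩⟩)

lemma quotient_connected {G : SimpleGraph V} (hc : G.Connected) (π : V → ι)
    (hπ : Function.Surjective π) :
    (SimpleGraph.fromRel fun a c => ∃ u v, G.Adj u v ∧ π u = a ∧ π v = c).Connected := by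
  have : Nonempty V := hc.nonempty
  rw [connected_iff]
  refine ⟨?_, ⟨π (Classical.arbitrary V)⟩⟩
  intro a b
  obtain ⟨u, rfl⟩ := hπ a
  obtain ⟨v, rfl⟩ := hπ b
  exact reachable_quotient π (hc.preconnected u v)

/-- Within a fiber of `π` one can travel avoiding any set of cross edges. -/
lemma fiber_reachable {G : SimpleGraph V} (π : V → ι)
    (hblocks : ∀ a : ι, (G.induce (π ⁻¹' {a})).Connected)
    (S : Set (Sym2 V)) (hS : ∀ e ∈ S, ¬ (Sym2.map π e).IsDiag)
    {u v : V} (h : π u = π v) : (G.deleteEdges S).Reachable u v := by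
  have hu : u ∈ π ⁻¹' {π u} := rfl
  have hv : v ∈ π ⁻¹' {π u} := by simpa using h.symm
  have hr := (hblocks (π u)).preconnected ⟨u, hu⟩ ⟨v, hv⟩
  have key : ∀ {x y : ↥(π ⁻¹' {π u})}, (G.induce (π ⁻¹' {π u})).Walk x y →
      (G.deleteEdges S).Reachable x.val y.val := by
    intro x y p
    induction p with
    | nil => exact Reachable.refl _
    | @cons x z y h q ih =>
      have hxz : G.Adj x.val z.val := h
      have hadj : (G.deleteEdges S).Adj x.val z.val := by
        refine SimpleGraph.deleteEdges_adj.mpr ⟨hxz, fun hmem => ?_⟩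
        have hd := hS _ hmem
        simp only [Sym2.map_pair_eq, Sym2.mk_isDiag_iff] at hd
        exact hd ((Set.mem_preimage.mp x.2).trans (Set.mem_preimage.mp z.2).symm)
      exact hadj.reachable.trans ih
  obtain ⟨p⟩ := hr
  exact key p

/-- Lifting a walk in the quotient graph avoiding the image of a cross edge `e₀`
to reachability in `G` minus `e₀`. -/
lemma lift_reachable {G : SimpleGraph V} (π : V → ι)
    (hblocks : ∀ a : ι, (G.induce (π ⁻¹' {a})).Connected)
    {e₀ : Sym2 V} (he₀ : ¬ (Sym2.map π e₀).IsDiag) :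
    ∀ {a b : ι},
      ((SimpleGraph.fromRel fun a c => ∃ u v, G.Adj u v ∧ π u = a ∧ π v = c).deleteEdges
        {Sym2.map π e₀}).Walk a b →
      ∀ u v : V, π u = a → π v = b → (G.deleteEdges {e₀}).Reachable u v := by
  intro a b w
  induction w with
  | nil =>
    intro u v hu hv
    exact fiber_reachable π hblocks _ (by rintro e rfl; exact he₀) (hu.trans hv.symm)
  | @cons a c b h p ih =>
    intro u v hu hv
    rw [SimpleGraph.deleteEdges_adj] at h
    obtain ⟨hadj, hne⟩ := h
    rw [SimpleGraph.fromRel_adj] at hadj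
    obtain ⟨hac, hex⟩ := hadj
    obtain ⟨x, y, hxy, hx, hy⟩ : ∃ x y, G.Adj x y ∧ π x = a ∧ π y = c := by
      rcases hex with ⟨x, y, hxy, hx, hy⟩ | ⟨x, y, hxy, hx, hy⟩
      · exact ⟨x, y, hxy, hx, hy⟩
      · exact ⟨y, x, hxy.symm, hy, hx⟩
    have hedge : (G.deleteEdges {e₀}).Adj x y := by
      refine SimpleGraph.deleteEdges_adj.mpr ⟨hxy, fun hmem => ?_⟩
      apply hne
      have : e₀ = s(x, y) := (by simpa using hmem : s(x, y) = e₀).symm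
      rw [this, Sym2.map_pair_eq, hx, hy]
      simp
    exact (fiber_reachable π hblocks {e₀} (by rintro e rfl; exact he₀)
        (hu.trans hx.symm)).trans (hedge.reachable.trans (ih y v hy hv))

/-- Two distinct cross edges with the same image would contradict the first
being a bridge. -/
lemma cross_map_inj {G : SimpleGraph V} (π : V → ι)
    (hblocks : ∀ a : ι, (G.induce (π ⁻¹' {a})).Connected)
    {e₁ e₂ : Sym2 V} (h₁ : e₁ ∈ G.edgeSet) (h₂ : e₂ ∈ G.edgeSet)
    (hc₁ : ¬ (Sym2.map π e₁).IsDiag) (hb : G.IsBridge e₁)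
    (heq : Sym2.map π e₁ = Sym2.map π e₂) : e₁ = e₂ := by
  induction e₁ using Sym2.ind with | _ u v =>
  induction e₂ using Sym2.ind with | _ x y =>
  by_contra hne
  rw [Sym2.map_pair_eq, Sym2.map_pair_eq, Sym2.eq_iff] at heq
  apply SimpleGraph.isBridge_iff.mp hb
  have hcross : ∀ z w : V, π z = π w → (G.deleteEdges {s(u, v)}).Reachable z w := fun z w h =>
    fiber_reachable π hblocks {s(u, v)} (by rintro e rfl; exact hc₁) h
  have hxy' : (G.deleteEdges {s(u, v)}).Adj x y :=
    SimpleGraph.deleteEdges_adj.mpr ⟨h₂, by simpa using Ne.symm hne⟩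
  rcases heq with ⟨hux, hvy⟩ | ⟨huy, hvx⟩
  · exact (hcross u x hux).trans (hxy'.reachable.trans (hcross y v hvy.symm))
  · exact (hcross u y huy).trans (hxy'.symm.reachable.trans (hcross x v hvx.symm))

lemma reachable_deleteEdges_of_walk {G : SimpleGraph V} {v w : V}
    (h : (G.deleteEdges {s(v, w)}).Reachable v w) :
    ∀ {x y : V}, G.Walk x y → (G.deleteEdges {s(v, w)}).Reachable x y := by
  intro x y p
  induction p with
  | nil => exact Reachable.refl _
  | @cons x z y hadj p ih =>
    refine Reachable.trans ?_ ih
    by_cases he : s(x, z) = s(v, w)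
    · rcases Sym2.eq_iff.mp he with ⟨rfl, rfl⟩ | ⟨rfl, rfl⟩
      · exact h
      · exact h.symm
    · exact (SimpleGraph.deleteEdges_adj.mpr ⟨hadj, by simpa using he⟩).reachable

/-- A connected finite graph has at least `card V - 1` edges. -/
lemma card_le_of_connected :
    ∀ (n : ℕ) {V : Type*} [Fintype V] (G : SimpleGraph V) [Fintype G.edgeSet],
      G.edgeFinset.card = n → G.Connected → Fintype.card V ≤ n + 1 := by
  intro n
  induction n using Nat.strong_induction_on with
  | _ n ih =>
    intro V _ G _ hcard hc
    classical
    by_cases ha : G.IsAcyclic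
    · have := SimpleGraph.IsTree.card_edgeFinset ⟨hc, ha⟩
      omega
    · rw [SimpleGraph.isAcyclic_iff_forall_adj_isBridge] at ha
      push_neg at ha
      obtain ⟨v, w, hadj, hnb⟩ := ha
      have hreach : (G.deleteEdges {s(v, w)}).Reachable v w := by
        by_contra hr
        exact hnb (SimpleGraph.isBridge_iff.mpr hr)
      have hsub : (G.deleteEdges {s(v, w)}).edgeSet ⊆ G.edgeSet := by
        rw [SimpleGraph.edgeSet_deleteEdges]; exact Set.diff_subset
      haveI : Fintype (G.deleteEdges {s(v, w)}).edgeSet := Set.fintypeSubset _ hsub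
      have hconn₂ : (G.deleteEdges {s(v, w)}).Connected := by
        rw [connected_iff]
        refine ⟨fun x y => ?_, hc.nonempty⟩
        exact (hc.preconnected x y).elim fun p => reachable_deleteEdges_of_walk hreach p
      have hE : (G.deleteEdges {s(v, w)}).edgeFinset = G.edgeFinset.erase s(v, w) := by
        ext e
        simp [SimpleGraph.edgeSet_deleteEdges, and_comm]
      have hmem : s(v, w) ∈ G.edgeFinset := by
        rw [mem_edgeFinset]; exact hadj
      have hn : 1 ≤ n := by
        rw [← hcard]
        exact Finset.card_pos.mpr ⟨_, hmem⟩
      have hlt : (G.deleteEdges {s(v, w)}).edgeFinset.card = n - 1 := by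
        rw [hE, Finset.card_erase_of_mem hmem, hcard]
      have := ih (n - 1) (by omega) (G.deleteEdges {s(v, w)}) hlt hconn₂
      omega

/-- Lower bound on the number of cross edges of a connected graph. -/
lemma crossCount_lb {V ι : Type*} [Fintype V] [Fintype ι] [DecidableEq ι]
    (G : SimpleGraph V) [Fintype G.edgeSet] (hc : G.Connected) (π : V → ι)
    (hπ : Function.Surjective π) :
    Fintype.card ι - 1 ≤ (G.edgeFinset.filter fun e => ¬ (Sym2.map π e).IsDiag).card := by
  classical
  set H := SimpleGraph.fromRel fun a c => ∃ u v, G.Adj u v ∧ π u = a ∧ π v = c with hH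
  haveI : Fintype H.edgeSet := Set.Finite.fintype (Set.toFinite _)
  have hHconn : H.Connected := quotient_connected hc π hπ
  have h1 : Fintype.card ι ≤ H.edgeFinset.card + 1 :=
    card_le_of_connected H.edgeFinset.card H rfl hHconn
  have h2 : H.edgeFinset.card ≤
      (G.edgeFinset.filter fun e => ¬ (Sym2.map π e).IsDiag).card := by
    apply Finset.card_le_card_of_surjOn (Sym2.map π)
    rintro e' he'
    rw [Finset.mem_coe, mem_edgeFinset] at he'
    induction e' using Sym2.ind with | _ a b =>
    rw [SimpleGraph.mem_edgeSet, hH, SimpleGraph.fromRel_adj] at he'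
    obtain ⟨hab, hex⟩ := he'
    obtain ⟨x, y, hxy, hx, hy⟩ : ∃ x y, G.Adj x y ∧ π x = a ∧ π y = b := by
      rcases hex with ⟨x, y, hxy, hx, hy⟩ | ⟨x, y, hxy, hx, hy⟩
      · exact ⟨x, y, hxy, hx, hy⟩
      · exact ⟨y, x, hxy.symm, hy, hx⟩
    refine ⟨s(x, y), ?_, ?_⟩
    · rw [Finset.mem_coe, Finset.mem_filter, mem_edgeFinset]
      refine ⟨hxy, ?_⟩
      rw [Sym2.map_pair_eq, Sym2.mk_isDiag_iff, hx, hy]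
      exact hab
    · rw [Sym2.map_pair_eq, hx, hy]
  omega

end BBAux

open BBAux

/-- Let `G` be a connected graph and `π : V → ι` a partition of its vertices
whose blocks (the fibers of `π`) induce connected subgraphs. Then the
bridge-block decomposition of `G` is finer than the partition (i.e. vertices in
the same bridge-block lie in the same block of the partition) if and only if
the reduced multigraph is a tree, i.e. the quotient graph is connected and the
number of cross-edges of `G` equals the number of blocks minus one. -/
theorem bridgeBlock_finer_iff_reduced_tree {V ι : Type*} [Fintype V] [Fintype ι]
    [DecidableEq ι] (G : SimpleGraph V) [DecidableRel G.Adj] (hG : G.Connected)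
    (π : V → ι) (hπ : Function.Surjective π)
    (hblocks : ∀ a : ι, (G.induce (π ⁻¹' {a})).Connected) :
    (∀ u v : V, (G.deleteEdges {e | G.IsBridge e}).Reachable u v → π u = π v) ↔
      ((SimpleGraph.fromRel fun a c => ∃ u v, G.Adj u v ∧ π u = a ∧ π v = c).Connected ∧
        (G.edgeFinset.filter fun e => ¬ (Sym2.map π e).IsDiag).card =
          Fintype.card ι - 1) := by
  classical
  set H := SimpleGraph.fromRel fun a c => ∃ u v, G.Adj u v ∧ π u = a ∧ π v = c with hH
  constructor
  · intro hL
    have hbridge : ∀ e ∈ G.edgeSet, ¬ (Sym2.map π e).IsDiag → G.IsBridge e := by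
      intro e he hcross
      induction e using Sym2.ind with | _ u v =>
      rw [Sym2.map_pair_eq, Sym2.mk_isDiag_iff] at hcross
      by_contra hnb
      apply hcross
      apply hL u v
      exact (SimpleGraph.deleteEdges_adj.mpr ⟨he, (hnb : s(u, v) ∉ {e | G.IsBridge e})⟩ :
        (G.deleteEdges {e | G.IsBridge e}).Adj u v).reachable
    have hHconn : H.Connected := quotient_connected hG π hπ
    have hHbridge : ∀ ⦃a b : ι⦄, H.Adj a b → H.IsBridge s(a, b) := by
      intro a b hab
      have hab' := hab
      rw [hH, SimpleGraph.fromRel_adj] at hab'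
      obtain ⟨hne, hex⟩ := hab'
      obtain ⟨x, y, hxy, hx, hy⟩ : ∃ x y, G.Adj x y ∧ π x = a ∧ π y = b := by
        rcases hex with ⟨x, y, hxy, hx, hy⟩ | ⟨x, y, hxy, hx, hy⟩
        · exact ⟨x, y, hxy, hx, hy⟩
        · exact ⟨y, x, hxy.symm, hy, hx⟩
      subst hx; subst hy
      have hcrossxy : ¬ (Sym2.map π s(x, y)).IsDiag := by
        rw [Sym2.map_pair_eq, Sym2.mk_isDiag_iff]
        exact hne
      have hbx : G.IsBridge s(x, y) := hbridge _ hxy hcrossxy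
      rw [SimpleGraph.isBridge_iff]
      refine fun hr => ?_
      obtain ⟨p⟩ := hr
      have hmap : Sym2.map π s(x, y) = s(π x, π y) := Sym2.map_pair_eq _ _ _
      have p' : (H.deleteEdges {Sym2.map π s(x, y)}).Walk (π x) (π y) := by
        rw [hmap]; exact p
      have := lift_reachable π hblocks hcrossxy p' x y rfl rfl
      exact SimpleGraph.isBridge_iff.mp hbx this
    have hacyc : H.IsAcyclic := SimpleGraph.isAcyclic_iff_forall_adj_isBridge.mpr hHbridge
    haveI : Fintype H.edgeSet := Set.Finite.fintype (Set.toFinite _)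
    have htree : H.IsTree := ⟨hHconn, hacyc⟩
    have hcardH : H.edgeFinset.card + 1 = Fintype.card ι := htree.card_edgeFinset
    have hcard : (G.edgeFinset.filter fun e => ¬ (Sym2.map π e).IsDiag).card =
        H.edgeFinset.card := by
      apply Finset.card_bij (fun e _ => Sym2.map π e)
      · intro e he
        rw [Finset.mem_filter, mem_edgeFinset] at he
        obtain ⟨he, hcross⟩ := he
        induction e using Sym2.ind with | _ u v =>
        rw [mem_edgeFinset, Sym2.map_pair_eq, SimpleGraph.mem_edgeSet, hH,
          SimpleGraph.fromRel_adj]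
        rw [Sym2.map_pair_eq, Sym2.mk_isDiag_iff] at hcross
        exact ⟨hcross, Or.inl ⟨u, v, he, rfl, rfl⟩⟩
      · intro e₁ h₁ e₂ h₂ heq
        rw [Finset.mem_filter, mem_edgeFinset] at h₁ h₂
        exact cross_map_inj π hblocks h₁.1 h₂.1 h₁.2 (hbridge _ h₁.1 h₁.2) heq
      · intro e' he'
        rw [mem_edgeFinset] at he'
        induction e' using Sym2.ind with | _ a b =>
        rw [SimpleGraph.mem_edgeSet, hH, SimpleGraph.fromRel_adj] at he'
        obtain ⟨hab, hex⟩ := he'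
        obtain ⟨x, y, hxy, hx, hy⟩ : ∃ x y, G.Adj x y ∧ π x = a ∧ π y = b := by
          rcases hex with ⟨x, y, hxy, hx, hy⟩ | ⟨x, y, hxy, hx, hy⟩
          · exact ⟨x, y, hxy, hx, hy⟩
          · exact ⟨y, x, hxy.symm, hy, hx⟩
        refine ⟨s(x, y), ?_, ?_⟩
        · rw [Finset.mem_filter, mem_edgeFinset]
          refine ⟨hxy, ?_⟩
          rw [Sym2.map_pair_eq, Sym2.mk_isDiag_iff, hx, hy]
          exact hab
        · rw [Sym2.map_pair_eq, hx, hy]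
    exact ⟨hHconn, by omega⟩
  · rintro ⟨hHconn, hcount⟩
    have hbridge : ∀ e ∈ G.edgeSet, ¬ (Sym2.map π e).IsDiag → G.IsBridge e := by
      intro e he hcross
      induction e using Sym2.ind with | _ u v =>
      rw [SimpleGraph.mem_edgeSet] at he
      rw [SimpleGraph.isBridge_iff]
      refine fun hr => ?_
      have hr' : (G.deleteEdges {s(u, v)}).Reachable u v := hr
      have hconn₂ : (G.deleteEdges {s(u, v)}).Connected := by
        rw [connected_iff]
        refine ⟨fun x y => ?_, hG.nonempty⟩
        exact (hG.preconnected x y).elim fun p => reachable_deleteEdges_of_walk hr' p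
      have hsub : (G.deleteEdges {s(u, v)}).edgeSet ⊆ G.edgeSet := by
        rw [SimpleGraph.edgeSet_deleteEdges]; exact Set.diff_subset
      haveI : Fintype (G.deleteEdges {s(u, v)}).edgeSet := Set.fintypeSubset _ hsub
      have hLB := crossCount_lb (G.deleteEdges {s(u, v)}) hconn₂ π hπ
      have hEq : ((G.deleteEdges {s(u, v)}).edgeFinset.filter
            fun e => ¬ (Sym2.map π e).IsDiag) =
          (G.edgeFinset.filter fun e => ¬ (Sym2.map π e).IsDiag).erase s(u, v) := by
        ext e
        simp only [Finset.mem_filter, Finset.mem_erase, mem_edgeFinset,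
          SimpleGraph.edgeSet_deleteEdges, Set.mem_diff, Set.mem_singleton_iff]
        tauto
      have hmem : s(u, v) ∈ G.edgeFinset.filter fun e => ¬ (Sym2.map π e).IsDiag := by
        rw [Finset.mem_filter, mem_edgeFinset]
        exact ⟨he, hcross⟩
      have h2 : 2 ≤ Fintype.card ι := by
        have hne : π u ≠ π v := by
          simpa [Sym2.map_pair_eq, Sym2.mk_isDiag_iff] using hcross
        exact Fintype.one_lt_card_iff_nontrivial.mpr ⟨⟨_, _, hne⟩⟩
      rw [hEq, Finset.card_erase_of_mem hmem, hcount] at hLB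
      omega
    intro u v hr
    obtain ⟨p⟩ := hr
    induction p with
    | nil => rfl
    | @cons x z y hadj p ih =>
      rw [SimpleGraph.deleteEdges_adj] at hadj
      obtain ⟨hxz, hnb⟩ := hadj
      have hstep : π x = π z := by
        by_contra hne
        exact hnb (hbridge s(x, z) hxz (by
          rw [Sym2.map_pair_eq, Sym2.mk_isDiag_iff]; exact hne))
      exact hstep.trans ih
end

section
/- For any line ℓ = (i, j) of a connected weighted graph G, the diagonal PTDF satisfies D_{ℓℓ} = b_ℓ · (spanning-forest weight of T({i},{j})) / (total spanning-tree weight of G) = 1 − (Σ_{F ∈ T∖{ℓ}} β(F)) / (Σ_{F ∈ T} β(F)), where T∖{ℓ} is the set of spanning trees of G avoiding ℓ. In particular 0 < D_{ℓℓ} ≤ 1. -/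
open Finset
open scoped Classical

/-- The weight `β(F)` of a set of edges: the product of the edge weights. -/
noncomputable def edgeSetWeight {V : Type*} (w : Sym2 V → ℝ) (F : Finset (Sym2 V)) : ℝ :=
  ∏ e ∈ F, w e

/-- `F` is (the edge set of) a spanning tree of `G`: it consists of edges of `G`,
joins all vertices, and has `n - 1` edges. -/
def IsSpanningTreeOf {V : Type*} [Fintype V] (G : SimpleGraph V) (F : Finset (Sym2 V)) : Prop :=
  (F : Set (Sym2 V)) ⊆ G.edgeSet ∧ (SimpleGraph.fromEdgeSet (F : Set (Sym2 V))).Connected ∧ F.card = Fintype.card V - 1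

/-- `F` is (the edge set of) a spanning forest of `G` consisting of exactly two
trees, one containing `i` and the other containing `j`. -/
def IsTwoForestSep {V : Type*} [Fintype V] (G : SimpleGraph V) (i j : V)
    (F : Finset (Sym2 V)) : Prop :=
  (F : Set (Sym2 V)) ⊆ G.edgeSet ∧ ¬ (SimpleGraph.fromEdgeSet (F : Set (Sym2 V))).Reachable i j ∧
    (∀ u, (SimpleGraph.fromEdgeSet (F : Set (Sym2 V))).Reachable u i ∨
      (SimpleGraph.fromEdgeSet (F : Set (Sym2 V))).Reachable u j) ∧
    F.card = Fintype.card V - 2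

section Aux

open SimpleGraph

variable {V : Type*}


private lemma reach_split_aux (H : SimpleGraph V) (i j : V) {u v : V} (p : H.Walk u v) :
    (H \ SimpleGraph.fromEdgeSet {s(i,j)}).Reachable u v ∨
      ((H \ SimpleGraph.fromEdgeSet {s(i,j)}).Reachable u i ∨
        (H \ SimpleGraph.fromEdgeSet {s(i,j)}).Reachable u j) ∧
      ((H \ SimpleGraph.fromEdgeSet {s(i,j)}).Reachable i v ∨
        (H \ SimpleGraph.fromEdgeSet {s(i,j)}).Reachable j v) := by
  set K := H \ SimpleGraph.fromEdgeSet {s(i,j)} with hK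
  induction p with
  | nil => exact Or.inl (Reachable.refl _)
  | @cons u x v h' q ih =>
    by_cases he : s(u, x) = s(i, j)
    · have hxside : K.Reachable i v ∨ K.Reachable j v := by
        rcases ih with h1 | h1
        · rw [Sym2.eq_iff] at he
          rcases he with ⟨_, hx⟩ | ⟨_, hx⟩
          · exact Or.inr (hx ▸ h1)
          · exact Or.inl (hx ▸ h1)
        · exact h1.2
      rw [Sym2.eq_iff] at he
      rcases he with ⟨hu, _⟩ | ⟨hu, _⟩
      · exact Or.inr ⟨Or.inl (hu ▸ Reachable.refl _), hxside⟩
      · exact Or.inr ⟨Or.inr (hu ▸ Reachable.refl _), hxside⟩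
    · have hadj : K.Adj u x := by
        refine ⟨h', ?_⟩
        rintro ⟨hm, -⟩
        exact he hm
      rcases ih with h1 | ⟨h2, h3⟩
      · exact Or.inl (hadj.reachable.trans h1)
      · refine Or.inr ⟨?_, h3⟩
        rcases h2 with h2 | h2
        · exact Or.inl (hadj.reachable.trans h2)
        · exact Or.inr (hadj.reachable.trans h2)

/-- Splitting reachability: if `u` reaches `i` in `H`, then after deleting the edge
`s(i,j)`, `u` still reaches `i` or reaches `j`. -/
lemma reach_split (H : SimpleGraph V) (i j : V) {u : V} (h : H.Reachable u i) :
    (H \ SimpleGraph.fromEdgeSet {s(i,j)}).Reachable u i ∨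
      (H \ SimpleGraph.fromEdgeSet {s(i,j)}).Reachable u j := by
  obtain ⟨p⟩ := h
  rcases reach_split_aux H i j p with h1 | ⟨h2, _⟩
  · exact Or.inl h1
  · exact h2

/-- Deleting an edge lying on a cycle keeps the graph connected. -/
lemma nonbridge_delete_connected {H : SimpleGraph V} (hH : H.Connected) {a b x : V}
    (c : H.Walk x x) (hc : c.IsCycle) (hmem : s(a, b) ∈ c.edges) :
    (H \ SimpleGraph.fromEdgeSet {s(a,b)}).Connected := by
  have hadj : H.Adj a b := c.adj_of_mem_edges hmem
  have hnb : ¬ H.IsBridge s(a, b) := by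
    rw [isBridge_iff_adj_and_forall_cycle_notMem]
    push_neg
    exact ⟨x, c, hc, hmem⟩
    exact hadj
  rw [isBridge_iff] at hnb
  push_neg at hnb
  have hab : (H \ SimpleGraph.fromEdgeSet {s(a,b)}).Reachable a b := hnb
  have key : ∀ u, (H \ SimpleGraph.fromEdgeSet {s(a,b)}).Reachable u a := by
    intro u
    rcases reach_split H a b (hH.preconnected u a) with h1 | h1
    · exact h1
    · exact h1.trans hab.symm
  haveI : Nonempty V := hH.nonempty
  exact ⟨fun u v => (key u).trans (key v).symm⟩

/-- A connected graph has a spanning tree through any given edge. -/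
lemma exists_spanning_tree_with_edge [Fintype V] {G : SimpleGraph V} (hG : G.Connected)
    {e : Sym2 V} (he : e ∈ G.edgeSet) :
    ∃ F : Finset (Sym2 V), (F : Set (Sym2 V)) ⊆ G.edgeSet ∧
      (SimpleGraph.fromEdgeSet (F : Set (Sym2 V))).Connected ∧
      F.card = Fintype.card V - 1 ∧ e ∈ F := by
  classical
  set S : Finset (Finset (Sym2 V)) := Finset.univ.filter
    (fun F => (F : Set (Sym2 V)) ⊆ G.edgeSet ∧
      (SimpleGraph.fromEdgeSet (F : Set (Sym2 V))).Connected ∧ e ∈ F) with hS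
  have hSne : S.Nonempty := by
    refine ⟨G.edgeFinset, ?_⟩
    simp only [hS, Finset.mem_filter, Finset.mem_univ, true_and]
    rw [SimpleGraph.coe_edgeFinset]
    exact ⟨subset_rfl, by rw [SimpleGraph.fromEdgeSet_edgeSet]; exact hG,
      by rwa [SimpleGraph.mem_edgeFinset]⟩
  obtain ⟨F, hFS, hmin⟩ := S.exists_min_image Finset.card hSne
  simp only [hS, Finset.mem_filter, Finset.mem_univ, true_and] at hFS
  obtain ⟨hsub, hconn, heF⟩ := hFS
  refine ⟨F, hsub, hconn, ?_, heF⟩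
  -- show the minimal such `F` is acyclic, hence a tree with `n - 1` edges
  have hac : (SimpleGraph.fromEdgeSet (F : Set (Sym2 V))).IsAcyclic := by
    by_contra hcyc
    rw [SimpleGraph.IsAcyclic] at hcyc
    push_neg at hcyc
    obtain ⟨x, c, hc⟩ := hcyc
    -- pick an edge of the cycle different from `e`
    have h3 : 3 ≤ c.edges.length := by
      rw [SimpleGraph.Walk.length_edges]; exact hc.three_le_length
    have hnd := hc.edges_nodup
    have hex : ∃ f ∈ c.edges, f ≠ e := by
      by_contra hno
      push_neg at hno
      have h0 : c.edges.get ⟨0, by omega⟩ = e := hno _ (List.get_mem c.edges ⟨0, by omega⟩)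
      have h1 : c.edges.get ⟨1, by omega⟩ = e := hno _ (List.get_mem c.edges ⟨1, by omega⟩)
      have := (List.Nodup.get_inj_iff hnd).mp (h0.trans h1.symm)
      simp at this
    obtain ⟨f, hfc, hfe⟩ := hex
    have hfF : f ∈ F := by
      have := SimpleGraph.Walk.edges_subset_edgeSet c hfc
      rw [SimpleGraph.edgeSet_fromEdgeSet] at this
      exact this.1
    -- delete `f`
    obtain ⟨a, b⟩ := f
    have hconn' : (SimpleGraph.fromEdgeSet ((F.erase s(a,b) : Finset (Sym2 V)) : Set (Sym2 V))).Connected := by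
      rw [Finset.coe_erase, SimpleGraph.fromEdgeSet_sdiff]
      exact nonbridge_delete_connected hconn c hc hfc
    have hmem' : F.erase s(a,b) ∈ S := by
      simp only [hS, Finset.mem_filter, Finset.mem_univ, true_and]
      refine ⟨?_, hconn', Finset.mem_erase.mpr ⟨fun h => hfe h.symm, heF⟩⟩
      · intro g hg
        exact hsub (Finset.mem_coe.mpr (Finset.mem_of_mem_erase (Finset.mem_coe.mp hg)))
    have := hmin _ hmem'
    have hlt : (F.erase s(a,b)).card < F.card := Finset.card_erase_lt_of_mem hfF
    omega
  have htree : (SimpleGraph.fromEdgeSet (F : Set (Sym2 V))).IsTree :=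
    ⟨hconn, hac⟩
  haveI : Fintype (SimpleGraph.fromEdgeSet (F : Set (Sym2 V))).edgeSet :=
    (Set.toFinite _).fintype
  have hcard := htree.card_edgeFinset
  have hEF : (SimpleGraph.fromEdgeSet (F : Set (Sym2 V))).edgeFinset = F := by
    ext g
    rw [SimpleGraph.mem_edgeFinset, SimpleGraph.edgeSet_fromEdgeSet]
    simp only [Set.mem_diff, Finset.mem_coe, Set.mem_setOf_eq]
    exact ⟨fun h => h.1, fun h => ⟨h, G.not_isDiag_of_mem_edgeSet (hsub h)⟩⟩
  rw [hEF] at hcard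
  omega

/-- A connected graph on the edge set `F` (without loops) needs at least `n - 1` edges. -/
lemma conn_card_lb [Fintype V] {F : Finset (Sym2 V)}
    (hd : ∀ e ∈ F, ¬ e.IsDiag)
    (hc : (SimpleGraph.fromEdgeSet (F : Set (Sym2 V))).Connected) :
    Fintype.card V - 1 ≤ F.card := by
  classical
  rcases F.eq_empty_or_nonempty with rfl | ⟨e, heF⟩
  · have : (SimpleGraph.fromEdgeSet ((∅ : Finset (Sym2 V)) : Set (Sym2 V))) = ⊥ := by
      rw [Finset.coe_empty, SimpleGraph.fromEdgeSet_empty]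
    rw [this] at hc
    have hsub : Subsingleton V := by
      constructor
      intro a b
      exact SimpleGraph.reachable_bot.mp (hc.preconnected a b)
    have := Fintype.card_le_one_iff_subsingleton.mpr hsub
    simp
    omega
  · have he' : e ∈ (SimpleGraph.fromEdgeSet (F : Set (Sym2 V))).edgeSet := by
      rw [SimpleGraph.edgeSet_fromEdgeSet]
      exact ⟨heF, hd e heF⟩
    obtain ⟨F', hsub', _, hcard', _⟩ := exists_spanning_tree_with_edge hc he'
    have hFF : F' ⊆ F := by
      intro g hg
      have := hsub' (Finset.mem_coe.mpr hg)
      rw [SimpleGraph.edgeSet_fromEdgeSet] at this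
      exact this.1
    calc Fintype.card V - 1 = F'.card := hcard'.symm
      _ ≤ F.card := Finset.card_le_card hFF

end Aux

/-- Spanning-tree expression for the diagonal PTDF of a line `ℓ = (i,j)`:
`D_ℓℓ = b_ℓ · β(T({i},{j}))/β(T) = 1 - β(T∖{ℓ})/β(T)`, and `0 < D_ℓℓ ≤ 1`. -/
theorem diagonal_PTDF_spanning_tree_formula {V : Type*} [Fintype V] [DecidableEq V]
    (G : SimpleGraph V) (hG : G.Connected)
    (w : Sym2 V → ℝ) (hw : ∀ e ∈ G.edgeSet, 0 < w e)
    (i j : V) (hij : s(i, j) ∈ G.edgeSet)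
    (Tsum D : ℝ)
    (hTsum : Tsum = ∑ F ∈ Finset.univ.filter (IsSpanningTreeOf G), edgeSetWeight w F)
    (hD : D = w s(i, j) *
      (∑ F ∈ Finset.univ.filter (IsTwoForestSep G i j), edgeSetWeight w F) / Tsum) :
    D = 1 - (∑ F ∈ Finset.univ.filter
        (fun F => IsSpanningTreeOf G F ∧ s(i, j) ∉ F), edgeSetWeight w F) / Tsum ∧
      0 < D ∧ D ≤ 1 := by
  have hadjG : G.Adj i j := G.mem_edgeSet.mp hij
  have hne : i ≠ j := hadjG.ne
  have hn2 : 2 ≤ Fintype.card V := Fintype.one_lt_card_iff_nontrivial.mpr ⟨i, j, hne⟩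
  set ℓ : Sym2 V := s(i, j) with hℓ
  -- forward: two-forest plus ℓ is a spanning tree containing ℓ
  have hnotmem : ∀ F : Finset (Sym2 V), IsTwoForestSep G i j F → ℓ ∉ F := by
    rintro F ⟨hsub, hnr, -, -⟩ hmem
    exact hnr (SimpleGraph.Adj.reachable
      (by rw [SimpleGraph.fromEdgeSet_adj]; exact ⟨hmem, hne⟩))
  have fwd : ∀ F : Finset (Sym2 V), IsTwoForestSep G i j F →
      IsSpanningTreeOf G (insert ℓ F) ∧ ℓ ∈ insert ℓ F := by
    rintro F hF
    obtain ⟨hsub, hnr, hall, hcard⟩ := hF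
    have hnm := hnotmem F ⟨hsub, hnr, hall, hcard⟩
    refine ⟨⟨?_, ?_, ?_⟩, Finset.mem_insert_self _ _⟩
    · rw [Finset.coe_insert, Set.insert_subset_iff]
      exact ⟨hij, hsub⟩
    · set K := SimpleGraph.fromEdgeSet ((insert ℓ F : Finset (Sym2 V)) : Set (Sym2 V)) with hKdef
      have hle : SimpleGraph.fromEdgeSet (F : Set (Sym2 V)) ≤ K := by
        apply SimpleGraph.fromEdgeSet_mono
        rw [Finset.coe_insert]
        exact Set.subset_insert _ _
      have hKadj : K.Adj i j := by
        rw [hKdef, SimpleGraph.fromEdgeSet_adj]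
        exact ⟨Finset.mem_coe.mpr (Finset.mem_insert_self _ _), hne⟩
      have key : ∀ u, K.Reachable u i := by
        intro u
        rcases hall u with h | h
        · exact h.mono hle
        · exact (h.mono hle).trans hKadj.symm.reachable
      haveI : Nonempty V := ⟨i⟩
      exact ⟨fun u v => (key u).trans (key v).symm⟩
    · rw [Finset.card_insert_of_notMem hnm, hcard]
      omega
  -- backward: spanning tree containing ℓ minus ℓ is a two forest
  have bwd : ∀ F : Finset (Sym2 V), IsSpanningTreeOf G F → ℓ ∈ F →
      IsTwoForestSep G i j (F.erase ℓ) := by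
    rintro F ⟨hsub, hconn, hcard⟩ hmem
    have hre : SimpleGraph.fromEdgeSet ((F.erase ℓ : Finset (Sym2 V)) : Set (Sym2 V)) =
        SimpleGraph.fromEdgeSet (F : Set (Sym2 V)) \ SimpleGraph.fromEdgeSet {ℓ} := by
      rw [Finset.coe_erase, SimpleGraph.fromEdgeSet_sdiff]
    have hall : ∀ u, (SimpleGraph.fromEdgeSet ((F.erase ℓ : Finset (Sym2 V)) : Set (Sym2 V))).Reachable u i ∨
        (SimpleGraph.fromEdgeSet ((F.erase ℓ : Finset (Sym2 V)) : Set (Sym2 V))).Reachable u j := by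
      intro u
      rw [hre]
      exact reach_split _ i j (hconn.preconnected u i)
    refine ⟨?_, ?_, hall, ?_⟩
    · rw [Finset.coe_erase]
      exact Set.Subset.trans Set.diff_subset hsub
    · intro hr
      have key : ∀ u, (SimpleGraph.fromEdgeSet ((F.erase ℓ : Finset (Sym2 V)) : Set (Sym2 V))).Reachable u i := by
        intro u
        rcases hall u with h | h
        · exact h
        · exact h.trans hr.symm
      have hconn' : (SimpleGraph.fromEdgeSet ((F.erase ℓ : Finset (Sym2 V)) : Set (Sym2 V))).Connected := by
        haveI : Nonempty V := ⟨i⟩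
        exact ⟨fun u v => (key u).trans (key v).symm⟩
      have hd : ∀ e ∈ F.erase ℓ, ¬ e.IsDiag := fun e he =>
        G.not_isDiag_of_mem_edgeSet (hsub (Finset.mem_coe.mpr (Finset.mem_of_mem_erase he)))
      have := conn_card_lb hd hconn'
      rw [Finset.card_erase_of_mem hmem, hcard] at this
      omega
    · rw [Finset.card_erase_of_mem hmem, hcard]
      omega
  -- positivity of weights
  have hpos : ∀ F : Finset (Sym2 V), (F : Set (Sym2 V)) ⊆ G.edgeSet → 0 < edgeSetWeight w F := by
    intro F hsub
    exact Finset.prod_pos fun e he => hw e (hsub (Finset.mem_coe.mpr he))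
  -- Tsum is positive
  obtain ⟨F₀, hF₀sub, hF₀conn, hF₀card, hF₀mem⟩ := exists_spanning_tree_with_edge hG hij
  have hF₀ : IsSpanningTreeOf G F₀ := ⟨hF₀sub, hF₀conn, hF₀card⟩
  have hTpos : 0 < Tsum := by
    rw [hTsum]
    apply Finset.sum_pos
    · intro F hF
      rw [Finset.mem_filter] at hF
      exact hpos F hF.2.1
    · exact ⟨F₀, Finset.mem_filter.mpr ⟨Finset.mem_univ _, hF₀⟩⟩
  -- split the spanning-tree sum
  set B : ℝ := ∑ F ∈ Finset.univ.filter
      (fun F => IsSpanningTreeOf G F ∧ s(i, j) ∉ F), edgeSetWeight w F with hB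
  set C : ℝ := ∑ F ∈ Finset.univ.filter (IsTwoForestSep G i j), edgeSetWeight w F with hC
  have hsplit : Tsum = (∑ F ∈ Finset.univ.filter
      (fun F => IsSpanningTreeOf G F ∧ ℓ ∈ F), edgeSetWeight w F) + B := by
    rw [hTsum, hB, ← Finset.sum_filter_add_sum_filter_not
      (Finset.univ.filter (IsSpanningTreeOf G)) (fun F => ℓ ∈ F), Finset.filter_filter,
      Finset.filter_filter]
  -- the bijection
  have hbij : (∑ F ∈ Finset.univ.filter
      (fun F => IsSpanningTreeOf G F ∧ ℓ ∈ F), edgeSetWeight w F) = w ℓ * C := by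
    rw [hC, Finset.mul_sum]
    refine Finset.sum_nbij' (fun F => F.erase ℓ) (fun F => insert ℓ F) ?_ ?_ ?_ ?_ ?_
    · intro F hF
      rw [Finset.mem_filter] at hF ⊢
      exact ⟨Finset.mem_univ _, bwd F hF.2.1 hF.2.2⟩
    · intro F hF
      rw [Finset.mem_filter] at hF ⊢
      exact ⟨Finset.mem_univ _, fwd F hF.2⟩
    · intro F hF
      rw [Finset.mem_filter] at hF
      exact Finset.insert_erase hF.2.2
    · intro F hF
      rw [Finset.mem_filter] at hF
      exact Finset.erase_insert (hnotmem F hF.2)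
    · intro F hF
      rw [Finset.mem_filter] at hF
      exact (Finset.mul_prod_erase F w hF.2.2).symm
  have hBnn : 0 ≤ B := by
    rw [hB]
    apply Finset.sum_nonneg
    intro F hF
    rw [Finset.mem_filter] at hF
    exact le_of_lt (hpos F hF.2.1.1)
  have hwCpos : 0 < w ℓ * C := by
    rw [← hbij]
    apply Finset.sum_pos
    · intro F hF
      rw [Finset.mem_filter] at hF
      exact hpos F hF.2.1.1
    · exact ⟨F₀, Finset.mem_filter.mpr ⟨Finset.mem_univ _, hF₀, hF₀mem⟩⟩
  have hwC : w ℓ * C = Tsum - B := by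
    rw [hsplit, hbij]; ring
  have hDval : D = (Tsum - B) / Tsum := by
    rw [hD, mul_div_assoc] at *
    rw [hD, ← hwC, mul_div_assoc]
  refine ⟨?_, ?_, ?_⟩
  · rw [hDval, sub_div, div_self (ne_of_gt hTpos)]
  · rw [hD]
    exact div_pos hwCpos hTpos
  · rw [hDval]
    rw [div_le_one hTpos]
    linarith
end
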